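/- (Perfect cooling in the doubling-degeneracy machine construction.) For θ > 0 and integers N > θ, set ε := θ/N and define p(N) := (1 + ε(1−ε)^N / (1 − (1−ε)^N + ε (1−ε)^N 2^{−N}))^{−1}. Then lim_{N→∞} N·(1 − p(N)) = θ/(e^θ − 1); in particular p(N) → 1 as N → ∞. -/

import Mathlib

open Filter

/-- Ground-state population of a maximally mixed qubit after the maximal cooling unitary
with the doubling-degeneracy machine of dimension `2^(N+1)` with `ε = θ/N`. -/
noncomputable def groundPop (θ : ℝ) (N : ℕ) : ℝ :=
  (1 + (θ / N) * (1 - θ / N) ^ N /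
      (1 - (1 - θ / N) ^ N + (θ / N) * (1 - θ / N) ^ N * ((2 : ℝ) ^ N)⁻¹))⁻¹

/-- Perfect cooling in the doubling-degeneracy machine construction:
`N·(1 − p(N)) → θ/(e^θ − 1)`, and in particular `p(N) → 1`. -/
theorem doubling_degeneracy_perfect_cooling (θ : ℝ) (hθ : 0 < θ) :
    Tendsto (fun N : ℕ => (N : ℝ) * (1 - groundPop θ N)) atTop
        (nhds (θ / (Real.exp θ - 1))) ∧
    Tendsto (fun N : ℕ => groundPop θ N) atTop (nhds 1) := by
  have hea : Tendsto (fun N : ℕ => (1 - θ / N) ^ N) atTop (nhds (Real.exp (-θ))) := by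
    simpa [sub_eq_add_neg, neg_div] using Real.tendsto_one_add_div_pow_exp (-θ)
  have heps : Tendsto (fun N : ℕ => θ / N) atTop (nhds 0) :=
    tendsto_const_div_atTop_nhds_zero_nat θ
  have h2 : Tendsto (fun N : ℕ => ((2 : ℝ) ^ N)⁻¹) atTop (nhds 0) := by
    have : Tendsto (fun N : ℕ => (2 : ℝ) ^ N) atTop atTop :=
      tendsto_pow_atTop_atTop_of_one_lt (by norm_num)
    exact tendsto_inv_atTop_zero.comp this
  set D : ℕ → ℝ := fun N =>
    1 - (1 - θ / N) ^ N + (θ / N) * (1 - θ / N) ^ N * ((2 : ℝ) ^ N)⁻¹ with hDdef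
  have hexplt : Real.exp (-θ) < 1 := by
    calc Real.exp (-θ) < Real.exp 0 := Real.exp_lt_exp.mpr (by linarith)
      _ = 1 := Real.exp_zero
  have hDlim : Tendsto D atTop (nhds (1 - Real.exp (-θ))) := by
    have : Tendsto D atTop (nhds (1 - Real.exp (-θ) + 0 * Real.exp (-θ) * 0)) :=
      ((tendsto_const_nhds.sub hea).add ((heps.mul hea).mul h2))
    simpa using this
  have hDne : (1 : ℝ) - Real.exp (-θ) ≠ 0 := by linarith
  set x : ℕ → ℝ := fun N => (θ / N) * (1 - θ / N) ^ N / D N with hxdef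
  have hx : Tendsto x atTop (nhds 0) := by
    have : Tendsto x atTop (nhds (0 * Real.exp (-θ) / (1 - Real.exp (-θ)))) :=
      (heps.mul hea).div hDlim hDne
    simpa using this
  have hgp : ∀ N, groundPop θ N = (1 + x N)⁻¹ := fun N => rfl
  have h1x : Tendsto (fun N => (1 + x N)⁻¹) atTop (nhds 1) := by
    have : Tendsto (fun N => (1 + x N)) atTop (nhds (1 + 0)) :=
      tendsto_const_nhds.add hx
    rw [add_zero] at this
    simpa using this.inv₀ one_ne_zero
  have hsecond : Tendsto (fun N : ℕ => groundPop θ N) atTop (nhds 1) := by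
    simpa [hgp] using h1x
  refine ⟨?_, hsecond⟩
  -- eventually 1 + x N ≠ 0
  have hev : ∀ᶠ N : ℕ in atTop, 1 + x N ≠ 0 := by
    have := hx (Metric.ball_mem_nhds (0 : ℝ) one_pos)
    filter_upwards [this] with N hN
    have hN' : |x N| < 1 := by simpa [Real.dist_eq] using hN
    have := abs_lt.mp hN'
    linarith [this.1]
  have hNx : Tendsto (fun N : ℕ => (N : ℝ) * x N) atTop
      (nhds (θ * Real.exp (-θ) / (1 - Real.exp (-θ)))) := by
    have heq : ∀ᶠ N : ℕ in atTop, (N : ℝ) * x N = θ * (1 - θ / N) ^ N / D N := by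
      filter_upwards [eventually_ge_atTop 1] with N hN
      have hN0 : (N : ℝ) ≠ 0 := Nat.cast_ne_zero.mpr (by omega)
      simp only [hxdef]
      field_simp
    have hlim : Tendsto (fun N : ℕ => θ * (1 - θ / N) ^ N / D N) atTop
        (nhds (θ * Real.exp (-θ) / (1 - Real.exp (-θ)))) :=
      ((tendsto_const_nhds.mul hea)).div hDlim hDne
    exact Filter.Tendsto.congr' (heq.mono fun _ h => h.symm) hlim
  have hmain : Tendsto (fun N : ℕ => (N : ℝ) * x N * (1 + x N)⁻¹) atTop
      (nhds (θ * Real.exp (-θ) / (1 - Real.exp (-θ)))) := by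
    simpa using hNx.mul h1x
  have hLeq : θ * Real.exp (-θ) / (1 - Real.exp (-θ)) = θ / (Real.exp θ - 1) := by
    rw [Real.exp_neg]
    have h0 : Real.exp θ ≠ 0 := Real.exp_ne_zero θ
    have h1 : Real.exp θ - 1 ≠ 0 := by
      have : 1 < Real.exp θ := by
        calc (1 : ℝ) = Real.exp 0 := Real.exp_zero.symm
          _ < Real.exp θ := Real.exp_lt_exp.mpr hθ
      linarith
    field_simp
  rw [← hLeq]
  refine hmain.congr' ?_
  filter_upwards [hev] with N hN
  rw [hgp N]
  field_simp
  ring
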